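/- arXiv:2006.09836 — 3 statements merged into one kernel-verified Lean document; each statement's English description precedes it below -/
import Mathlib

section
/- The Hadamard (hypertangent) cone Ha(F, x̄) is closed under addition: if h₁, h₂ ∈ Ha(F, x̄) then h₁ + h₂ ∈ Ha(F, x̄), provided x̄ ∈ F. -/
open Filter Topology

variable {X : Type*} [AddCommGroup X] [Module ℝ X] [TopologicalSpace X]
  [IsTopologicalAddGroup X] [ContinuousSMul ℝ X]

/-- The Hadamard (hypertangent) cone. -/
def Ha (F : Set X) (xbar : X) : Set X :=
  {h | ∃ U ∈ nhds xbar, ∃ W ∈ nhds h, ∃ lam > (0:ℝ),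
    ∀ x' ∈ F ∩ U, ∀ lam' : ℝ, 0 < lam' → lam' ≤ lam → ∀ w ∈ W, x' + lam' • w ∈ F}

theorem ha_add (F : Set X) (xbar : X) (hx : xbar ∈ F)
    (h₁ h₂ : X) (hh₁ : h₁ ∈ Ha F xbar) (hh₂ : h₂ ∈ Ha F xbar) :
    h₁ + h₂ ∈ Ha F xbar := by
  obtain ⟨U₁, hU₁, W₁, hW₁, lam₁, hlam₁, H₁⟩ := hh₁
  obtain ⟨U₂, hU₂, W₂, hW₂, lam₂, hlam₂, H₂⟩ := hh₂
  -- continuity: (x, t) ↦ x + t • h₁ is continuous at (xbar, 0) with value xbar ∈ U₂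
  have hcont : Continuous (fun p : X × ℝ => p.1 + p.2 • h₁) := by continuity
  have hmem : (fun p : X × ℝ => p.1 + p.2 • h₁) ⁻¹' U₂ ∈ nhds ((xbar, (0:ℝ)) : X × ℝ) := by
    apply hcont.continuousAt.preimage_mem_nhds
    simpa using hU₂
  rw [nhds_prod_eq, Filter.mem_prod_iff] at hmem
  obtain ⟨U', hU', T, hT, hUT⟩ := hmem
  obtain ⟨ε, hε, hball⟩ := Metric.mem_nhds_iff.mp hT
  refine ⟨U₁ ∩ U', Filter.inter_mem hU₁ hU', {w | w - h₁ ∈ W₂}, ?_, min lam₁ (min lam₂ (ε/2)),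
    lt_min hlam₁ (lt_min hlam₂ (by linarith)), ?_⟩
  · have : Continuous (fun w : X => w - h₁) := by continuity
    have := this.continuousAt (x := h₁ + h₂) |>.preimage_mem_nhds (by simpa using hW₂)
    exact this
  · rintro x' ⟨hxF, hxU₁, hxU'⟩ lam' hlam'0 hlam'le w hw
    have hle₁ : lam' ≤ lam₁ := le_trans hlam'le (min_le_left _ _)
    have hle₂ : lam' ≤ lam₂ := le_trans hlam'le (le_trans (min_le_right _ _) (min_le_left _ _))
    have hleε : lam' ≤ ε/2 := le_trans hlam'le (le_trans (min_le_right _ _) (min_le_right _ _))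
    have hstep : x' + lam' • h₁ ∈ F := H₁ x' ⟨hxF, hxU₁⟩ lam' hlam'0 hle₁ h₁ (mem_of_mem_nhds hW₁)
    have hstepU₂ : x' + lam' • h₁ ∈ U₂ := by
      apply hUT (a := (x', lam'))
      constructor
      · exact hxU'
      · apply hball
        simp only [Metric.mem_ball, Real.dist_eq, sub_zero]
        rw [abs_of_pos hlam'0]; linarith
    have := H₂ (x' + lam' • h₁) ⟨hstep, hstepU₂⟩ lam' hlam'0 hle₂ (w - h₁) hw
    have heq : x' + lam' • h₁ + lam' • (w - h₁) = x' + lam' • w := by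
      rw [smul_sub]; abel
    rwa [heq] at this
end

section
/- If h ∈ Ha(F, x̄) and k ∈ Cl(F, x̄), then h + k ∈ Ha(F, x̄) (the hypertangent cone absorbs addition with Clarke tangents). -/
open Filter Topology

variable {X : Type*} [AddCommGroup X] [Module ℝ X] [TopologicalSpace X]
  [IsTopologicalAddGroup X] [ContinuousSMul ℝ X]

/-- The Clarke tangent cone. -/
def Cl (F : Set X) (xbar : X) : Set X :=
  {h | ∀ V ∈ nhds (0:X), ∃ U ∈ nhds xbar, ∃ lam > (0:ℝ),
    ∀ x' ∈ F ∩ U, ∀ lam' : ℝ, 0 < lam' → lam' ≤ lam →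
      ∃ h', h' - h ∈ V ∧ x' + lam' • h' ∈ F}

theorem ha_add_cl (F : Set X) (xbar : X) (h k : X)
    (hh : h ∈ Ha F xbar) (hk : k ∈ Cl F xbar) : h + k ∈ Ha F xbar := by
  obtain ⟨U, hU, W, hW, lam, hlam, hHa⟩ := hh
  -- a balanced neighborhood V of 0 with h + (V + V) ⊆ W
  have hW0 : (fun y : X => h + y) ⁻¹' W ∈ nhds (0:X) := by
    have hc : ContinuousAt (fun y : X => h + y) 0 :=
      (continuous_const.add continuous_id).continuousAt
    have := hc.preimage_mem_nhds (by simpa using hW)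
    simpa using this
  obtain ⟨V1, hV1, hV1sub⟩ := exists_nhds_zero_half hW0
  obtain ⟨V, ⟨hV, hVbal⟩, hVsub⟩ := (nhds_basis_balanced ℝ X).mem_iff.mp hV1
  -- neighborhoods controlling U : x' + a + b ∈ U
  have hS : (fun y : X => xbar + y) ⁻¹' U ∈ nhds (0:X) := by
    have hc : ContinuousAt (fun y : X => xbar + y) 0 :=
      (continuous_const.add continuous_id).continuousAt
    have := hc.preimage_mem_nhds (by simpa using hU)
    simpa using this
  obtain ⟨V2, hV2, hV2sub⟩ := exists_nhds_zero_half hS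
  obtain ⟨V3, hV3, hV3sub⟩ := exists_nhds_zero_half hV2
  obtain ⟨V3b, ⟨hV3b, hV3bbal⟩, hV3bsub⟩ := (nhds_basis_balanced ℝ X).mem_iff.mp hV3
  -- apply Clarke hypothesis with V ∩ V3b
  obtain ⟨U2, hU2, lam2, hlam2, hCl⟩ := hk (V ∩ V3b) (Filter.inter_mem hV hV3b)
  -- small scalars push k into V3b
  have hsmul : {t : ℝ | t • k ∈ V3b} ∈ nhds (0:ℝ) := by
    have hc : ContinuousAt (fun t : ℝ => t • k) 0 := (continuous_id.smul continuous_const).continuousAt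
    have := hc.preimage_mem_nhds (by simpa using hV3b)
    exact this
  obtain ⟨ε, hε, hεsub⟩ := Metric.mem_nhds_iff.mp hsmul
  -- assemble data
  refine ⟨U2 ∩ {x | x - xbar ∈ V2},
    Filter.inter_mem hU2 (by
      have hc : ContinuousAt (fun x : X => x - xbar) xbar := (continuous_id.sub continuous_const).continuousAt
      have := hc.preimage_mem_nhds (by simpa using hV2)
      exact this),
    {w | w - (h + k) ∈ V},
    (by
      have hc : ContinuousAt (fun w : X => w - (h + k)) (h + k) :=
        (continuous_id.sub continuous_const).continuousAt
      have := hc.preimage_mem_nhds (by simpa using hV)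
      exact this),
    min (min lam lam2) (min (ε/2) 1),
    lt_min (lt_min hlam hlam2) (lt_min (by linarith) one_pos), ?_⟩
  rintro x' ⟨hx'F, hx'U2, hx'V2⟩ lam' hlam'pos hlam'le w hwW
  have hle1 : lam' ≤ lam := le_trans hlam'le (le_trans (min_le_left _ _) (min_le_left _ _))
  have hle2 : lam' ≤ lam2 := le_trans hlam'le (le_trans (min_le_left _ _) (min_le_right _ _))
  have hle3 : lam' ≤ ε/2 := le_trans hlam'le (le_trans (min_le_right _ _) (min_le_left _ _))
  have hle4 : lam' ≤ 1 := le_trans hlam'le (le_trans (min_le_right _ _) (min_le_right _ _))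
  have hnorm : ‖lam'‖ ≤ 1 := by
    rw [Real.norm_eq_abs, abs_of_pos hlam'pos]; exact hle4
  obtain ⟨k', ⟨hk'V, hk'V3b⟩, hk'F⟩ := hCl x' ⟨hx'F, hx'U2⟩ lam' hlam'pos hle2
  -- x' + lam' • k' ∈ U
  have hmemU : x' + lam' • k' ∈ U := by
    have ha : lam' • k ∈ V3b := hεsub (by
      rw [Metric.mem_ball, Real.dist_eq, sub_zero, abs_of_pos hlam'pos]; linarith)
    have hb : lam' • (k' - k) ∈ V3b := hV3bbal.smul_mem hnorm hk'V3b
    have hab : lam' • k + lam' • (k' - k) ∈ V2 :=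
      hV3sub _ (hV3bsub ha) _ (hV3bsub hb)
    have := hV2sub _ hx'V2 _ hab
    have heq : xbar + (x' - xbar + (lam' • k + lam' • (k' - k))) = x' + lam' • k' := by
      rw [smul_sub]; abel
    rw [← heq]; exact this
  -- w - k' ∈ W
  have hmemW : w - k' ∈ W := by
    have ha : w - (h + k) ∈ V := hwW
    have hb : k - k' ∈ V := by
      have := hVbal.smul_mem (a := (-1:ℝ)) (by norm_num) hk'V
      simpa [neg_sub] using this
    have := hV1sub _ (hVsub ha) _ (hVsub hb)
    have heq : h + (w - (h + k) + (k - k')) = w - k' := by abel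
    rw [← heq]; exact this
  have := hHa (x' + lam' • k') ⟨hk'F, hmemU⟩ lam' hlam'pos hle1 (w - k') hmemW
  have heq : x' + lam' • k' + lam' • (w - k') = x' + lam' • w := by
    rw [smul_sub]; abel
  rw [← heq]; exact this
end

section
/- If the hypertangent cone Ha(F, x̄) is nonempty then the Clarke cone Cl(F, x̄) is contained in the closure of Ha(F, x̄). -/
open Filter Topology

variable {X : Type*} [AddCommGroup X] [Module ℝ X] [TopologicalSpace X]
  [IsTopologicalAddGroup X] [ContinuousSMul ℝ X]

lemma smul_mem_Ha {F : Set X} {xbar : X} {h : X} {t : ℝ} (ht : 0 < t)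
    (hh : h ∈ Ha F xbar) : t • h ∈ Ha F xbar := by
  obtain ⟨U, hU, W, hW, lam, hlam, hP⟩ := hh
  refine ⟨U, hU, (fun w => t⁻¹ • w) ⁻¹' W, ?_, lam / t, div_pos hlam ht, ?_⟩
  · have hc : ContinuousAt (fun w : X => t⁻¹ • w) (t • h) :=
      (continuous_const_smul _).continuousAt
    have heq : t⁻¹ • t • h = h := by rw [smul_smul, inv_mul_cancel₀ ht.ne', one_smul]
    exact hc.preimage_mem_nhds (by rw [heq]; exact hW)
  · intro x' hx' lam' hlam'0 hlam' w hw
    have h1 : x' + lam' • w = x' + (lam' * t) • (t⁻¹ • w) := by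
      rw [smul_smul, mul_assoc, mul_inv_cancel₀ ht.ne', mul_one]
    rw [h1]
    exact hP x' hx' (lam' * t) (mul_pos hlam'0 ht)
      ((le_div_iff₀ ht).mp hlam') _ hw

lemma add_mem_Ha {F : Set X} {xbar : X} {h k : X}
    (hh : h ∈ Ha F xbar) (hk : k ∈ Cl F xbar) : h + k ∈ Ha F xbar := by
  obtain ⟨U, hU, W, hW, lam, hlam, hP⟩ := hh
  -- neighborhoods of 0 corresponding to W and U
  have hSW : (fun v => h + v) ⁻¹' W ∈ 𝓝 (0 : X) := by
    have hc : ContinuousAt (fun v : X => h + v) 0 := (continuous_add_left h).continuousAt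
    exact hc.preimage_mem_nhds (by simpa using hW)
  have hSU : (fun v => xbar + v) ⁻¹' U ∈ 𝓝 (0 : X) := by
    have hc : ContinuousAt (fun v : X => xbar + v) 0 := (continuous_add_left xbar).continuousAt
    exact hc.preimage_mem_nhds (by simpa using hU)
  obtain ⟨VW, hVW, hVWadd⟩ := exists_nhds_zero_half hSW
  obtain ⟨VU, hVU, hVUadd⟩ := exists_nhds_zero_quarter hSU
  -- balanced neighborhood inside VW ∩ VU
  obtain ⟨V₀, ⟨hV₀, hV₀bal⟩, hV₀sub⟩ :=
    (nhds_basis_balanced ℝ X).mem_iff.mp (Filter.inter_mem hVW hVU)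
  have hV₀W : V₀ ⊆ VW := fun v hv => (hV₀sub hv).1
  have hV₀U : V₀ ⊆ VU := fun v hv => (hV₀sub hv).2
  -- Clarke property at V₀
  obtain ⟨U₁, hU₁, lam₁, hlam₁, hQ⟩ := hk V₀ hV₀
  -- small parameter so that lam' • k ∈ VU
  have htend : Tendsto (fun t : ℝ => t • k) (𝓝 0) (𝓝 (0 : X)) := by
    have := (continuous_id.smul (continuous_const : Continuous fun _ : ℝ => k)).tendsto (0 : ℝ)
    have h' : Tendsto (fun t : ℝ => t • k) (𝓝 0) (𝓝 ((0:ℝ) • k)) := this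
    simpa only [zero_smul] using h'
  obtain ⟨ε, hε, hεk⟩ := Metric.eventually_nhds_iff.mp (htend.eventually_mem hVU)
  set lam₂ : ℝ := min (min lam lam₁) (min 1 (ε / 2)) with hlam₂def
  have hlam₂ : 0 < lam₂ :=
    lt_min (lt_min hlam hlam₁) (lt_min one_pos (half_pos hε))
  -- the neighborhood of xbar consisting of points with x - xbar ∈ VU
  have hU₂ : (fun x => x - xbar) ⁻¹' VU ∈ 𝓝 xbar := by
    have hc : ContinuousAt (fun x : X => x - xbar) xbar :=
      ((continuous_id.sub continuous_const)).continuousAt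
    exact hc.preimage_mem_nhds (by simpa using hVU)
  -- the neighborhood of h + k
  have hW' : (fun w => w - (h + k)) ⁻¹' V₀ ∈ 𝓝 (h + k) := by
    have hc : ContinuousAt (fun w : X => w - (h + k)) (h + k) :=
      ((continuous_id.sub continuous_const)).continuousAt
    exact hc.preimage_mem_nhds (by simpa using hV₀)
  refine ⟨U₁ ∩ ((fun x => x - xbar) ⁻¹' VU), Filter.inter_mem hU₁ hU₂,
    (fun w => w - (h + k)) ⁻¹' V₀, hW', lam₂, hlam₂, ?_⟩
  rintro x' ⟨hx'F, hx'U₁, hx'U₂⟩ lam' hlam'0 hlam'le w hwmem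
  set v : X := w - (h + k) with hv
  have hvV₀ : v ∈ V₀ := hwmem
  have hlam'lam₁ : lam' ≤ lam₁ := hlam'le.trans ((min_le_left _ _).trans (min_le_right _ _))
  have hlam'lam : lam' ≤ lam := hlam'le.trans ((min_le_left _ _).trans (min_le_left _ _))
  have hlam'1 : lam' ≤ 1 := hlam'le.trans ((min_le_right _ _).trans (min_le_left _ _))
  have hlam'ε : |lam'| < ε := by
    rw [abs_of_pos hlam'0]
    exact lt_of_le_of_lt (hlam'le.trans ((min_le_right _ _).trans (min_le_right _ _)))
      (half_lt_self hε)
  obtain ⟨k', hk'V₀, hk'F⟩ := hQ x' ⟨hx'F, hx'U₁⟩ lam' hlam'0 hlam'lam₁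
  -- x' + lam' • k' ∈ U
  have hx''U : x' + lam' • k' ∈ U := by
    have h1 : lam' • k ∈ VU := by
      have := hεk (by simpa [Real.dist_eq] using hlam'ε)
      exact this
    have h2 : lam' • (k' - k) ∈ V₀ := by
      refine hV₀bal lam' (by rw [Real.norm_eq_abs, abs_of_pos hlam'0]; exact hlam'1) ?_
      exact ⟨k' - k, hk'V₀, rfl⟩
    have h0 : (0 : X) ∈ VU := mem_of_mem_nhds hVU
    have hmem := hVUadd hx'U₂ h1 (hV₀U h2) h0
    simp only [Set.mem_preimage] at hmem
    have heq : xbar + (x' - xbar + lam' • k + lam' • (k' - k) + 0) = x' + lam' • k' := by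
      rw [smul_sub]; abel
    rwa [heq] at hmem
  -- the direction h + (k - k') + v ∈ W
  have hwW : h + ((k - k') + v) ∈ W := by
    have h1 : k - k' ∈ VW := by
      refine hV₀W (?_ : k - k' ∈ V₀)
      have := hV₀bal (-1) (by norm_num) ⟨k' - k, hk'V₀, rfl⟩
      simpa using this
    exact hVWadd _ h1 _ (hV₀W hvV₀)
  have := hP (x' + lam' • k') ⟨hk'F, hx''U⟩ lam' hlam'0 hlam'lam _ hwW
  have heq : x' + lam' • k' + lam' • (h + ((k - k') + v)) = x' + lam' • w := by
    have hw : w = h + k + v := by rw [hv]; abel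
    rw [hw, smul_add, smul_add, smul_add, smul_sub, smul_add]; abel
  rwa [heq] at this

theorem cl_subset_closure_ha (F : Set X) (xbar : X) (hne : (Ha F xbar).Nonempty) :
    Cl F xbar ⊆ closure (Ha F xbar) := by
  obtain ⟨h₀, hh₀⟩ := hne
  intro k hk
  have htend : Tendsto (fun t : ℝ => t • h₀ + k) (𝓝[>] (0:ℝ)) (𝓝 k) := by
    have : Tendsto (fun t : ℝ => t • h₀ + k) (𝓝 (0:ℝ)) (𝓝 ((0:ℝ) • h₀ + k)) :=
      ((continuous_id.smul continuous_const).add continuous_const).tendsto 0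
    simpa using this.mono_left nhdsWithin_le_nhds
  refine mem_closure_of_tendsto htend ?_
  exact Filter.eventually_of_mem self_mem_nhdsWithin fun t ht =>
    add_mem_Ha (smul_mem_Ha ht hh₀) hk
end
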